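/- Let n ≥ 5 and 2 ≤ k < n/2 be integers and λ > 0. Define Ξ(t) = -ln(e^t/(1+e^{2t})) - ln(2^{1/2}·C(n,k)^{1/(2k)}) and E(t) = Ξ(t + ln λ). Then E satisfies F_k[E](t) = 1 and |E'(t)| < 1 for all t ∈ ℝ, where F_k[E](t) = 2^{1-k}·C(n-1,k-1)·e^{2kE(t)}(1-E'(t)²)^{k-1}(E''(t) + ((n-2k)/(2k))(1-E'(t)²)). -/

import Mathlib

open Real

theorem stmt_7 (n k : ℕ) (hn : 5 ≤ n) (hk : 2 ≤ k) (hkn : 2 * k < n)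
    (lam : ℝ) (hlam : 0 < lam)
    (Xi E : ℝ → ℝ)
    (hXi : ∀ t, Xi t = -Real.log (Real.exp t / (1 + Real.exp (2 * t)))
        - Real.log ((2:ℝ) ^ ((1:ℝ)/2) * ((n.choose k : ℝ)) ^ ((1:ℝ) / (2 * (k:ℝ)))))
    (hE : ∀ t, E t = Xi (t + Real.log lam)) :
    ∀ t : ℝ,
      (2:ℝ) ^ ((1:ℝ) - (k:ℝ)) * ((n - 1).choose (k - 1) : ℝ) *
        Real.exp (2 * (k:ℝ) * E t) * (1 - (deriv E t) ^ 2) ^ (k - 1) *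
        (deriv (deriv E) t + (((n:ℝ) - 2 * (k:ℝ)) / (2 * (k:ℝ))) * (1 - (deriv E t) ^ 2)) = 1
      ∧ |deriv E t| < 1 := by
  have hb : (0:ℝ) < (n.choose k : ℝ) := by
    exact_mod_cast Nat.choose_pos (by omega : k ≤ n)
  have hkpos : (0:ℝ) < (k:ℝ) := by
    have : 0 < k := by omega
    exact_mod_cast this
  have hk0 : (k:ℝ) ≠ 0 := ne_of_gt hkpos
  set L := Real.log lam with hL
  set C := Real.log ((2:ℝ) ^ ((1:ℝ)/2) * ((n.choose k : ℝ)) ^ ((1:ℝ) / (2 * (k:ℝ)))) with hCdef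
  -- explicit formula for E
  have hEfun : E = fun x => -(x + L) + Real.log (1 + Real.exp (2*(x+L))) - C := by
    funext x
    rw [hE, hXi]
    have h1 : (0:ℝ) < 1 + Real.exp (2*(x+L)) := by positivity
    rw [Real.log_div (Real.exp_ne_zero _) (ne_of_gt h1), Real.log_exp]
    ring_nf
  have hu : ∀ x : ℝ, HasDerivAt (fun y => Real.exp (2*(y+L))) (2 * Real.exp (2*(x+L))) x := by
    intro x
    have h : HasDerivAt (fun y : ℝ => 2*(y+L)) 2 x := by
      simpa using ((hasDerivAt_id x).add_const L).const_mul 2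
    simpa [mul_comm] using h.exp
  have hE' : ∀ x : ℝ, HasDerivAt E (-1 + 2 * Real.exp (2*(x+L)) / (1 + Real.exp (2*(x+L)))) x := by
    intro x
    rw [hEfun]
    have h1 : (0:ℝ) < 1 + Real.exp (2*(x+L)) := by positivity
    have hlog : HasDerivAt (fun y => Real.log (1 + Real.exp (2*(y+L))))
        (2 * Real.exp (2*(x+L)) / (1 + Real.exp (2*(x+L)))) x :=
      ((hu x).const_add 1).log (ne_of_gt h1)
    have hneg : HasDerivAt (fun y : ℝ => -(y + L)) (-1) x := by
      exact ((hasDerivAt_id x).add_const L).neg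
    simpa using (hneg.add hlog).sub_const C
  have hderivE : deriv E = fun x => -1 + 2 * Real.exp (2*(x+L)) / (1 + Real.exp (2*(x+L))) :=
    funext fun x => (hE' x).deriv
  have hE'' : ∀ x : ℝ, HasDerivAt (deriv E)
      ((2 * (2 * Real.exp (2*(x+L))) * (1 + Real.exp (2*(x+L))) -
        2 * Real.exp (2*(x+L)) * (2 * Real.exp (2*(x+L)))) / (1 + Real.exp (2*(x+L)))^2) x := by
    intro x
    rw [hderivE]
    have h1 : (0:ℝ) < 1 + Real.exp (2*(x+L)) := by positivity
    exact (((hu x).const_mul 2).div ((hu x).const_add 1) (ne_of_gt h1)).const_add (-1)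
  intro t
  set u := Real.exp (2*(t+L)) with hudef
  have hu0 : (0:ℝ) < u := Real.exp_pos _
  have h1u : (0:ℝ) < 1 + u := by positivity
  have hdE : deriv E t = -1 + 2*u/(1+u) := by rw [hderivE]
  have hd2 : deriv (deriv E) t = 4*u/(1+u)^2 := by
    rw [(hE'' t).deriv]
    field_simp
    ring
  have h1E : 1 - (deriv E t)^2 = 4*u/(1+u)^2 := by
    rw [hdE]
    field_simp
    ring
  constructor
  · -- main identity
    have hexpE : Real.exp (2*(k:ℝ)*E t) = (1+u)^(2*k) / (u^k * (2^k * (n.choose k : ℝ))) := by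
      have hCval : 2*(k:ℝ)*C = (k:ℝ)*Real.log 2 + Real.log (n.choose k : ℝ) := by
        rw [hCdef, Real.log_mul (by positivity) (by positivity),
          Real.log_rpow two_pos, Real.log_rpow hb]
        field_simp
      have hsplit : 2*(k:ℝ)*E t = (k:ℝ)*(-(2*(t+L))) + ((2*k : ℕ):ℝ)*Real.log (1+u)
          - ((k:ℝ)*Real.log 2 + Real.log (n.choose k : ℝ)) := by
        rw [← hCval, hEfun]
        push_cast
        ring
      rw [hsplit, Real.exp_sub, Real.exp_add, Real.exp_add, Real.exp_nat_mul,
        Real.exp_nat_mul, Real.exp_nat_mul, Real.exp_neg, Real.exp_log h1u,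
        Real.exp_log two_pos, Real.exp_log hb, ← hudef]
      field_simp
      rw [← mul_pow, one_div_mul_cancel hu0.ne', one_pow]
    have h2pow : (2:ℝ) ^ ((1:ℝ)-(k:ℝ)) = 2 / 2^k := by
      rw [Real.rpow_sub two_pos, Real.rpow_one, Real.rpow_natCast]
    have hid : (n:ℝ) * ((n-1).choose (k-1) : ℝ) = (k:ℝ) * (n.choose k : ℝ) := by
      have h1 : n - 1 + 1 = n := by omega
      have h2 : k - 1 + 1 = k := by omega
      have h := Nat.add_one_mul_choose_eq (n-1) (k-1)
      simp only [Nat.succ_eq_add_one, h1, h2] at h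
      exact_mod_cast h.trans (Nat.mul_comm _ _)
    have hk1 : k - 1 + 1 = k := by omega
    rw [hexpE, h2pow, hd2, h1E]
    have hA : (4*u/(1+u)^2)^(k-1) * (4*u/(1+u)^2 + ((n:ℝ) - 2*(k:ℝ))/(2*(k:ℝ)) * (4*u/(1+u)^2))
        = (2^k*(2^k*u^k)/(1+u)^(2*k)) * ((n:ℝ)/(2*(k:ℝ))) := by
      have e1 : 4*u/(1+u)^2 + ((n:ℝ) - 2*(k:ℝ))/(2*(k:ℝ)) * (4*u/(1+u)^2)
          = (4*u/(1+u)^2) * ((n:ℝ)/(2*(k:ℝ))) := by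
        field_simp
        ring
      rw [e1, ← mul_assoc, ← pow_succ, hk1, div_pow, ← pow_mul,
        show (4:ℝ)*u = 2*(2*u) by ring, mul_pow, mul_pow, mul_comm 2 k]
    rw [mul_assoc, mul_assoc, mul_assoc, hA]
    have h2k : ((1+u):ℝ)^(2*k) ≠ 0 := by positivity
    field_simp
    linear_combination hid
  · rw [hdE, abs_lt]
    constructor
    · have : 0 < 2*u/(1+u) := by positivity
      linarith
    · have : 2*u/(1+u) < 2 := by
        rw [div_lt_iff₀ h1u]
        linarith
      linarith
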